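/- Let H be a real symmetric n×n matrix strictly supported on G and let ψ ∈ ℝ^V be an eigenvector of H with eigenvalue λ. Let Ψ be the |V|×|V| diagonal matrix with entries Ψ_{rr} = ψ_r, and let Φ be the |E|×|E| diagonal matrix with Φ_{(r→s)} = −ψ_r H_{rs} ψ_s. Then d^⊤ Φ d = Ψ(H − λI)Ψ, where d is the coboundary (incidence) map of G. -/

import Mathlib

open Matrix

/-- A finite simple graph with a chosen orientation of each edge:
`E` is the edge index type, each edge `e` goes from `src e` to `tgt e`. -/
structure OrientedGraph (V E : Type*) where
  src : E → V
  tgt : E → V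
  loopless : ∀ e, src e ≠ tgt e
  edgeInj : ∀ e f, (src e = src f ∧ tgt e = tgt f) ∨ (src e = tgt f ∧ tgt e = src f) → e = f

/-- The underlying simple graph: `r` and `s` are adjacent iff some oriented edge joins them. -/
def OrientedGraph.toSimpleGraph {V E : Type*} (G : OrientedGraph V E) : SimpleGraph V where
  Adj r s := ∃ e, (G.src e = r ∧ G.tgt e = s) ∨ (G.src e = s ∧ G.tgt e = r)
  symm := by
    refine ⟨?_⟩
    intro r s h
    obtain ⟨e, h⟩ := h
    exact ⟨e, h.symm⟩
  loopless := by
    refine ⟨?_⟩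
    intro r h
    obtain ⟨e, h⟩ := h
    rcases h with ⟨h1, h2⟩ | ⟨h1, h2⟩ <;> exact G.loopless e (h1.trans h2.symm)

/-- `H` is strictly supported on `G`: off-diagonal entries are nonzero exactly on edges. -/
def OrientedGraph.StrictSupport {V E : Type*} (G : OrientedGraph V E)
    (H : Matrix V V ℝ) : Prop :=
  ∀ r s, r ≠ s → (H r s ≠ 0 ↔ G.toSimpleGraph.Adj r s)

/-- `H` is supported on `G`: off-diagonal nonzero entries occur only on edges. -/
def OrientedGraph.Support {V E : Type*} (G : OrientedGraph V E)
    (H : Matrix V V ℝ) : Prop :=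
  ∀ r s, r ≠ s → H r s ≠ 0 → G.toSimpleGraph.Adj r s

/-- The coboundary map `d : ℝ^V → ℝ^E`, `(dθ)_{(r→s)} = θ_s - θ_r`, as an `E × V` matrix. -/
def OrientedGraph.cob {V E : Type*} [DecidableEq V] (G : OrientedGraph V E) :
    Matrix E V ℝ :=
  Matrix.of fun e v => (if G.tgt e = v then (1 : ℝ) else 0) - (if G.src e = v then (1 : ℝ) else 0)

/-- The cycle space `Z = ker dᵀ ⊆ ℝ^E`. -/
noncomputable def OrientedGraph.cycleSpace {V E : Type*} [Fintype V] [Fintype E]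
    [DecidableEq V] (G : OrientedGraph V E) : Submodule ℝ (E → ℝ) :=
  LinearMap.ker (G.cob)ᵀ.mulVecLin

/-- The diagonal matrix `Φ` on `ℝ^E` with entries `Φ_{(r→s)} = -ψ_r H_{rs} ψ_s`. -/
noncomputable def PhiMat {V E : Type*} [DecidableEq E] (G : OrientedGraph V E)
    (H : Matrix V V ℝ) (ψ : V → ℝ) : Matrix E E ℝ :=
  Matrix.diagonal fun e => -(ψ (G.src e) * H (G.src e) (G.tgt e) * ψ (G.tgt e))

/-- The nodal count `ν(ψ,H) = #{(r→s) ∈ E : ψ_r H_{rs} ψ_s > 0}`. -/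
noncomputable def nodalCount {V E : Type*} (G : OrientedGraph V E)
    (H : Matrix V V ℝ) (ψ : V → ℝ) : ℕ :=
  Nat.card {e : E // 0 < ψ (G.src e) * H (G.src e) (G.tgt e) * ψ (G.tgt e)}

/-- `C` is a frame for the cycle space: its columns form a basis of `Z`. -/
def IsFrame {V E : Type*} [Fintype V] [Fintype E] [DecidableEq V]
    (G : OrientedGraph V E) {β : ℕ} (C : Matrix E (Fin β) ℝ) : Prop :=
  LinearMap.ker C.mulVecLin = ⊥ ∧ LinearMap.range C.mulVecLin = G.cycleSpace

/-- `n₋(A)`: the number of negative eigenvalues (with multiplicity) of a hermitian matrix. -/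
noncomputable def negEig {𝕜 : Type*} [RCLike 𝕜] {m : Type*} [Fintype m] [DecidableEq m]
    (A : Matrix m m 𝕜) : ℕ :=
  if h : A.IsHermitian then Nat.card {i // h.eigenvalues i < 0} else 0

/-- `n₊(A)`: the number of positive eigenvalues (with multiplicity) of a hermitian matrix. -/
noncomputable def posEig {𝕜 : Type*} [RCLike 𝕜] {m : Type*} [Fintype m] [DecidableEq m]
    (A : Matrix m m 𝕜) : ℕ :=
  if h : A.IsHermitian then Nat.card {i // 0 < h.eigenvalues i} else 0

/-- `n₀(A)`: the number of zero eigenvalues of a hermitian matrix, i.e. `dim ker A`. -/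
noncomputable def zeroEig {𝕜 : Type*} [RCLike 𝕜] {m : Type*} [Fintype m] [DecidableEq m]
    (A : Matrix m m 𝕜) : ℕ :=
  Module.finrank 𝕜 (LinearMap.ker A.mulVecLin)

/-- `n₋([A]_W)`: the Morse index (number of negative eigenvalues) of the compression of
a hermitian matrix `A` to the subspace `W`, i.e. the maximal dimension of a subspace of `W`
on which the hermitian form of `A` is negative definite. -/
noncomputable def negIndexOn {𝕜 : Type*} [RCLike 𝕜] {m : Type*} [Fintype m]
    (A : Matrix m m 𝕜) (W : Submodule 𝕜 (m → 𝕜)) : ℕ :=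
  sSup {k : ℕ | ∃ U : Submodule 𝕜 (m → 𝕜), U ≤ W ∧ Module.finrank 𝕜 U = k ∧
    ∀ x ∈ U, x ≠ 0 → RCLike.re (star x ⬝ᵥ A.mulVec x) < 0}

/-- `n₊([A]_W)`: the number of positive eigenvalues of the compression of a hermitian
matrix `A` to the subspace `W`. -/
noncomputable def posIndexOn {𝕜 : Type*} [RCLike 𝕜] {m : Type*} [Fintype m]
    (A : Matrix m m 𝕜) (W : Submodule 𝕜 (m → 𝕜)) : ℕ :=
  sSup {k : ℕ | ∃ U : Submodule 𝕜 (m → 𝕜), U ≤ W ∧ Module.finrank 𝕜 U = k ∧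
    ∀ x ∈ U, x ≠ 0 → 0 < RCLike.re (star x ⬝ᵥ A.mulVec x)}

/-- The linear functional `x ↦ v ⬝ᵥ x`. -/
noncomputable def dotLeft {𝕜 : Type*} [RCLike 𝕜] {m : Type*} [Fintype m] (v : m → 𝕜) :
    (m → 𝕜) →ₗ[𝕜] 𝕜 where
  toFun x := v ⬝ᵥ x
  map_add' x y := by simp [dotProduct_add]
  map_smul' c x := by simp [dotProduct_smul]

/-- `n₀([A]_W)`: the dimension of the kernel of the compression of `A` to `W`,
i.e. of `{x ∈ W : Ax ⊥ W}`. -/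
noncomputable def zeroIndexOn {𝕜 : Type*} [RCLike 𝕜] {m : Type*} [Fintype m]
    (A : Matrix m m 𝕜) (W : Submodule 𝕜 (m → 𝕜)) : ℕ :=
  Module.finrank 𝕜
    ↥(W ⊓ ⨅ y : W, LinearMap.ker ((dotLeft (star (y : m → 𝕜))).comp A.mulVecLin))

/-- Extension of `α ∈ ℝ^E` to an antisymmetric function on pairs of vertices:
`α_{rs} = α_e` if `e = (r→s) ∈ E`, `α_{rs} = -α_e` if `e = (s→r) ∈ E`, and `0` otherwise. -/
noncomputable def alphaExt {V E : Type*} [Fintype E] [DecidableEq V]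
    (G : OrientedGraph V E) (α : E → ℝ) (r s : V) : ℝ :=
  ∑ e : E, ((if G.src e = r ∧ G.tgt e = s then α e else 0) -
            (if G.src e = s ∧ G.tgt e = r then α e else 0))

/-- The phase-perturbed matrix `H_α` with `(H_α)_{rs} = e^{iα_{rs}} H_{rs}` for `r ≠ s`. -/
noncomputable def phaseMat {V E : Type*} [Fintype E] [DecidableEq V]
    (G : OrientedGraph V E) (H : Matrix V V ℝ) (α : E → ℝ) : Matrix V V ℂ :=
  Matrix.of fun r s =>
    if r = s then (H r r : ℂ)
    else Complex.exp (Complex.I * (alphaExt G α r s : ℂ)) * (H r s : ℂ)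

/-- `dᵀ Φ d = Ψ (H - λ I) Ψ`. -/
theorem coboundary_funny_product
    {V E : Type*} [Fintype V] [Fintype E] [DecidableEq V] [DecidableEq E]
    (G : OrientedGraph V E) (hconn : G.toSimpleGraph.Connected)
    (H : Matrix V V ℝ) (hsymm : H.IsSymm) (hsupp : G.StrictSupport H)
    (lam : ℝ) (ψ : V → ℝ) (heig : H.mulVec ψ = lam • ψ) (hψ0 : ψ ≠ 0) :
    (G.cob)ᵀ * PhiMat G H ψ * G.cob =
      Matrix.diagonal ψ * (H - lam • (1 : Matrix V V ℝ)) * Matrix.diagonal ψ := by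
  have hH0 : ∀ r s : V, r ≠ s → ¬ G.toSimpleGraph.Adj r s → H r s = 0 := by
    intro r s h hadj
    by_contra h0
    exact hadj ((hsupp r s h).mp h0)
  have huniq : ∀ (r s : V), r ≠ s → ∀ e f : E,
      ((G.src e = r ∧ G.tgt e = s) ∨ (G.src e = s ∧ G.tgt e = r)) →
      ((G.src f = r ∧ G.tgt f = s) ∨ (G.src f = s ∧ G.tgt f = r)) → e = f := by
    intro r s hrs e f he hf
    apply G.edgeInj
    rcases he with ⟨h1, h2⟩ | ⟨h1, h2⟩ <;> rcases hf with ⟨h3, h4⟩ | ⟨h3, h4⟩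
    · exact Or.inl ⟨h1.trans h3.symm, h2.trans h4.symm⟩
    · exact Or.inr ⟨h1.trans h4.symm, h2.trans h3.symm⟩
    · exact Or.inr ⟨h1.trans h4.symm, h2.trans h3.symm⟩
    · exact Or.inl ⟨h1.trans h3.symm, h2.trans h4.symm⟩
  have hjoin : ∀ (r s : V) (c : ℝ), r ≠ s → (¬ G.toSimpleGraph.Adj r s → c = 0) →
      (∑ e : E, (if (G.src e = r ∧ G.tgt e = s) ∨ (G.src e = s ∧ G.tgt e = r)
        then c else 0)) = c := by
    intro r s c hrs hc
    by_cases hadj : G.toSimpleGraph.Adj r s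
    · obtain ⟨e₀, he₀⟩ := hadj
      rw [Finset.sum_eq_single e₀]
      · rw [if_pos he₀]
      · intro f _ hf
        rw [if_neg]
        intro hP
        exact hf (huniq r s hrs f e₀ hP he₀)
      · intro h
        exact absurd (Finset.mem_univ e₀) h
    · rw [hc hadj]
      apply Finset.sum_eq_zero
      intro e _
      rw [if_neg]
      intro hP
      exact hadj ⟨e, hP⟩
  ext r s
  have hLHS : ((G.cob)ᵀ * PhiMat G H ψ * G.cob) r s =
      ∑ e : E, (G.cob e r * (-(ψ (G.src e) * H (G.src e) (G.tgt e) * ψ (G.tgt e)))) *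
        G.cob e s := by
    simp only [PhiMat]
    rw [Matrix.mul_apply]
    exact Finset.sum_congr rfl fun j _ => by
      rw [Matrix.mul_diagonal, Matrix.transpose_apply]
  have hRHS : (Matrix.diagonal ψ * (H - lam • (1 : Matrix V V ℝ)) * Matrix.diagonal ψ) r s =
      ψ r * (H r s - lam * (if r = s then 1 else 0)) * ψ s := by
    rw [Matrix.mul_diagonal, Matrix.diagonal_mul]
    simp only [Matrix.sub_apply, Matrix.smul_apply, Matrix.one_apply, smul_eq_mul]
  rw [hLHS, hRHS]
  by_cases hrs : r = s
  · subst s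
    rw [if_pos rfl]
    have hterm : ∀ e : E,
        (G.cob e r * (-(ψ (G.src e) * H (G.src e) (G.tgt e) * ψ (G.tgt e)))) * G.cob e r =
        ∑ s : V, ((if G.src e = r ∧ G.tgt e = s then -(ψ r * H r s * ψ s) else 0) +
                  (if G.src e = s ∧ G.tgt e = r then -(ψ r * H r s * ψ s) else 0)) := by
      intro e
      rw [Finset.sum_add_distrib]
      rw [Finset.sum_eq_single (G.tgt e)
        (by intro b _ hb; exact if_neg (fun h => hb h.2.symm))
        (by intro h; exact absurd (Finset.mem_univ _) h)]
      rw [Finset.sum_eq_single (G.src e)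
        (by intro b _ hb; exact if_neg (fun h => hb h.1.symm))
        (by intro h; exact absurd (Finset.mem_univ _) h)]
      obtain ⟨a, hsa⟩ : ∃ a, G.src e = a := ⟨_, rfl⟩
      obtain ⟨b, htb⟩ : ∃ b, G.tgt e = b := ⟨_, rfl⟩
      have hne : a ≠ b := by rw [← hsa, ← htb]; exact G.loopless e
      simp only [OrientedGraph.cob, Matrix.of_apply]
      rw [hsa, htb]
      simp only [eq_self_iff_true, and_true, true_and]
      by_cases h1 : a = r
      · rw [h1]
        have h2 : ¬ b = r := fun h => hne (h1.trans h.symm)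
        simp only [eq_self_iff_true, if_true, if_neg h2]
        ring
      · by_cases h2 : b = r
        · rw [h2]
          simp only [eq_self_iff_true, if_true, if_neg h1]
          rw [hsymm.apply r a]
          ring
        · simp only [if_neg h1, if_neg h2]
          ring
    rw [Finset.sum_congr rfl (fun e _ => hterm e), Finset.sum_comm]
    have hinner : ∀ s : V,
        (∑ e : E, ((if G.src e = r ∧ G.tgt e = s then -(ψ r * H r s * ψ s) else 0) +
                  (if G.src e = s ∧ G.tgt e = r then -(ψ r * H r s * ψ s) else 0))) =
        (if s = r then 0 else -(ψ r * H r s * ψ s)) := by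
      intro s
      by_cases hsr : s = r
      · subst s
        rw [if_pos rfl]
        apply Finset.sum_eq_zero
        intro e _
        rw [if_neg (fun h => G.loopless e (h.1.trans h.2.symm))]
        ring
      · rw [if_neg hsr]
        have hcomb : ∀ e : E,
            ((if G.src e = r ∧ G.tgt e = s then -(ψ r * H r s * ψ s) else 0) +
             (if G.src e = s ∧ G.tgt e = r then -(ψ r * H r s * ψ s) else 0)) =
            (if (G.src e = r ∧ G.tgt e = s) ∨ (G.src e = s ∧ G.tgt e = r)
              then -(ψ r * H r s * ψ s) else 0) := by
          intro e
          by_cases hP : G.src e = r ∧ G.tgt e = s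
          · have hQ : ¬ (G.src e = s ∧ G.tgt e = r) := fun hQ =>
              hsr (hQ.1.symm.trans hP.1)
            rw [if_pos hP, if_neg hQ, if_pos (Or.inl hP)]
            ring
          · by_cases hQ : G.src e = s ∧ G.tgt e = r
            · rw [if_neg hP, if_pos hQ, if_pos (Or.inr hQ)]
              ring
            · rw [if_neg hP, if_neg hQ,
                if_neg (fun h => h.elim (fun h => hP h) (fun h => hQ h))]
              ring
        rw [Finset.sum_congr rfl (fun e _ => hcomb e)]
        exact hjoin r s _ (fun h => hsr h.symm)
          (fun hadj => by rw [hH0 r s (fun h => hsr h.symm) hadj]; ring)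
    rw [Finset.sum_congr rfl (fun s _ => hinner s)]
    have hsplit : ∀ s : V, (if s = r then 0 else -(ψ r * H r s * ψ s)) =
        -(ψ r * H r s * ψ s) + (if s = r then ψ r * H r s * ψ s else 0) := by
      intro s; split_ifs <;> ring
    rw [Finset.sum_congr rfl (fun s _ => hsplit s), Finset.sum_add_distrib,
        Finset.sum_ite_eq' Finset.univ r (fun s => ψ r * H r s * ψ s)]
    have hmv : ∑ s : V, H r s * ψ s = lam * ψ r := by
      have := congrFun heig r
      simpa [Matrix.mulVec, dotProduct] using this
    have hsum : ∑ s : V, -(ψ r * H r s * ψ s) = -(ψ r * (lam * ψ r)) := by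
      rw [← hmv, Finset.mul_sum, ← Finset.sum_neg_distrib]
      exact Finset.sum_congr rfl (fun s _ => by ring)
    rw [hsum]
    simp only [Finset.mem_univ, if_true]
    ring
  · rw [if_neg hrs]
    have hterm : ∀ e : E,
        (G.cob e r * (-(ψ (G.src e) * H (G.src e) (G.tgt e) * ψ (G.tgt e)))) * G.cob e s =
        (if (G.src e = r ∧ G.tgt e = s) ∨ (G.src e = s ∧ G.tgt e = r)
          then ψ r * H r s * ψ s else 0) := by
      intro e
      obtain ⟨a, hsa⟩ : ∃ a, G.src e = a := ⟨_, rfl⟩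
      obtain ⟨b, htb⟩ : ∃ b, G.tgt e = b := ⟨_, rfl⟩
      have hne : a ≠ b := by rw [← hsa, ← htb]; exact G.loopless e
      simp only [OrientedGraph.cob, Matrix.of_apply]
      rw [hsa, htb]
      by_cases h1 : a = r
      · rw [h1]
        by_cases h4 : b = s
        · rw [h4]
          simp only [eq_self_iff_true, and_self, true_and, and_true, true_or, if_true,
            if_neg hrs, if_neg (Ne.symm hrs)]
          ring
        · have hor : ¬((r = r ∧ b = s) ∨ (r = s ∧ b = r)) := by
            rintro (⟨-, h⟩ | ⟨h, -⟩); exacts [h4 h, hrs h]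
          rw [if_neg hor, if_neg h4, if_neg hrs]
          ring
      · by_cases h2 : b = r
        · rw [h2]
          by_cases h3 : a = s
          · rw [h3]
            simp only [eq_self_iff_true, and_self, true_and, and_true, or_true, if_true,
              if_neg hrs, if_neg (Ne.symm hrs)]
            rw [hsymm.apply r s]
            ring
          · have hor : ¬((a = r ∧ r = s) ∨ (a = s ∧ r = r)) := by
              rintro (⟨-, h⟩ | ⟨h, -⟩); exacts [hrs h, h3 h]
            rw [if_neg hor, if_neg h3, if_neg hrs]
            ring
        · have hor : ¬((a = r ∧ b = s) ∨ (a = s ∧ b = r)) := by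
            rintro (⟨h, -⟩ | ⟨-, h⟩); exacts [h1 h, h2 h]
          rw [if_neg h1, if_neg h2, if_neg hor]
          ring
    rw [Finset.sum_congr rfl (fun e _ => hterm e),
        hjoin r s _ hrs (fun hadj => by rw [hH0 r s hrs hadj]; ring)]
    ring
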